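/- The rational plane ℚ² ⊆ ℝ² extends linearly in 2D: there exists a linearly regular 2-dimensional flat S ⊆ ℝ², a positive real ε, and a point x ∈ S ∩ ℚ² such that every point u of S with d(x,u) < ε lies in ℚ². (Concretely, one may take S = ℚ² itself, which is a linearly regular 2-dimensional flat.) -/

import Mathlib

variable {n : ℕ}

/-- Euclidean betweenness: `t` lies between `s` and `u`. -/
def Beta (s t u : EuclideanSpace ℝ (Fin n)) : Prop :=
  dist s u = dist s t + dist t u

/-- Strict betweenness. -/
def BetaS (s t u : EuclideanSpace ℝ (Fin n)) : Prop :=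
  Beta s t u ∧ s ≠ t ∧ t ≠ u

/-- Three points are collinear (Tarski style). -/
def Coll (s t u : EuclideanSpace ℝ (Fin n)) : Prop :=
  Beta s t u ∨ Beta s u t ∨ Beta t s u

/-- `L` is a line in `T`. -/
def IsLineIn (T L : Set (EuclideanSpace ℝ (Fin n))) : Prop :=
  L ⊆ T ∧ (∃ s ∈ L, ∃ t ∈ L, s ≠ t) ∧
    (∀ s ∈ L, ∀ t ∈ L, ∀ u ∈ L, Coll s t u) ∧
    (∀ s ∈ L, ∀ t ∈ L, s ≠ t → ∀ u ∈ T, (Beta s u t ∨ Beta s t u) → u ∈ L)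

/-- `S` is an `m`-dimensional flat of ℝⁿ. -/
def IsFlat (m : ℕ) (S : Set (EuclideanSpace ℝ (Fin n))) : Prop :=
  ∃ (h : EuclideanSpace ℝ (Fin n)) (v : Fin m → EuclideanSpace ℝ (Fin n)),
    LinearIndependent ℝ v ∧
    S = {u | ∃ r : Fin m → ℝ, u = h + ∑ i, r i • v i}

/-- Two lines in `T` intersect. -/
def LinesIntersect (L₁ L₂ : Set (EuclideanSpace ℝ (Fin n))) : Prop :=
  L₁ ≠ L₂ ∧ (L₁ ∩ L₂).Nonempty

/-- `U` is a linearly regular `m`-dimensional flat. -/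
def LinearlyRegularFlat (m : ℕ) (U : Set (EuclideanSpace ℝ (Fin n))) : Prop :=
  (∃ S, IsFlat m S ∧ U ⊆ S) ∧
  (¬ ∃ S, IsFlat (m - 1) S ∧ U ⊆ S) ∧
  -- linearly complete
  (∀ L, IsLineIn U L → ∀ L', IsLineIn (Set.univ) L' → L ⊆ L' →
      ∀ r ∈ L', ∀ ε > (0 : ℝ), ∃ s ∈ L, dist s r < ε) ∧
  -- linearly closed
  (∀ L₁ L₂, IsLineIn U L₁ → IsLineIn U L₂ →
      (∃ L₁' L₂', IsLineIn (Set.univ) L₁' ∧ IsLineIn (Set.univ) L₂' ∧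
          L₁ ⊆ L₁' ∧ L₂ ⊆ L₂' ∧ L₁' ≠ L₂' ∧ (L₁' ∩ L₂').Nonempty) →
      ∃ s ∈ U, s ∈ L₁ ∩ L₂)

/-- `T` extends linearly in `m`D. -/
def ExtendsLinearlyIn (m : ℕ) (T : Set (EuclideanSpace ℝ (Fin n))) : Prop :=
  ∃ U, LinearlyRegularFlat m U ∧
    ∃ ε > (0 : ℝ), ∃ x ∈ U ∩ T, ∀ u ∈ U, dist x u < ε → u ∈ T

/-- `Q` is a sequence in `T`: a nonempty subset of a line in `T`. -/
def IsSequenceIn (T Q : Set (EuclideanSpace ℝ (Fin n))) : Prop :=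
  Q.Nonempty ∧ ∃ L, IsLineIn T L ∧ Q ⊆ L

/-- `s` and `u` are linearly `(T ∖ Q)`-connected. -/
def LinConnected (T Q : Set (EuclideanSpace ℝ (Fin n)))
    (s u : EuclideanSpace ℝ (Fin n)) : Prop :=
  s ≠ u ∧ ∀ r ∈ T, BetaS s r u → r ∉ Q

/-- `Q` is a discretely spaced sequence in `T`. -/
def DiscretelySpaced (T Q : Set (EuclideanSpace ℝ (Fin n))) : Prop :=
  IsSequenceIn T Q ∧
    ∀ s ∈ Q, ∀ t ∈ Q, s ≠ t →
      ∃ u ∈ T, u ≠ s ∧ Beta s u t ∧ ∀ r ∈ T, BetaS s r u → r ∉ Q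

/-- `s` is a base point of `Q` in `T`. -/
def IsBasePoint (Q : Set (EuclideanSpace ℝ (Fin n)))
    (s : EuclideanSpace ℝ (Fin n)) : Prop :=
  s ∈ Q ∧ ∀ u ∈ Q, ∃ v ∈ Q, v ≠ u ∧ Beta s u v

/-- `Q` is a discretely infinite sequence in `T`. -/
def DiscretelyInfinite (T Q : Set (EuclideanSpace ℝ (Fin n))) : Prop :=
  DiscretelySpaced T Q ∧ ∃ s, IsBasePoint Q s

/-- `s` is a zero-point of `Q`. -/
def IsZeroPoint (Q : Set (EuclideanSpace ℝ (Fin n)))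
    (s : EuclideanSpace ℝ (Fin n)) : Prop :=
  s ∈ Q ∧ ¬ ∃ u ∈ Q \ {s}, ∃ v ∈ Q \ {s}, Beta u s v

/-- `Q` is an ω-like sequence in `T`. -/
def OmegaLike (T Q : Set (EuclideanSpace ℝ (Fin n))) : Prop :=
  DiscretelyInfinite T Q ∧ (∃ s, IsZeroPoint Q s) ∧
    ∀ r ∈ T, (∃ s ∈ Q \ {r}, ∃ u ∈ Q \ {r}, Beta s r u) →
      ∃ s' ∈ Q \ {r}, ∃ u' ∈ Q \ {r}, Beta s' r u' ∧
        ∀ v ∈ T, v ≠ r → BetaS s' v u' → v ∉ Q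

/-- The successor relation `E` of a sequence `Q` in `T`. -/
def SuccRel (T Q : Set (EuclideanSpace ℝ (Fin n)))
    (u v : EuclideanSpace ℝ (Fin n)) : Prop :=
  u ∈ Q ∧ v ∈ Q ∧ LinConnected T Q u v ∧ ∃ z, IsZeroPoint Q z ∧ Beta z u v

/-- The rational plane. -/
def RationalPlane : Set (EuclideanSpace ℝ (Fin 2)) :=
  {p | ∀ i : Fin 2, ∃ q : ℚ, p i = (q : ℝ)}

lemma beta_iff (s t u : EuclideanSpace ℝ (Fin n)) : Beta s t u ↔ Wbtw ℝ s t u := by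
  rw [Beta, eq_comm, dist_add_dist_eq_iff]

lemma beta_symm {s t u : EuclideanSpace ℝ (Fin n)} (h : Beta s t u) : Beta u t s := by
  unfold Beta at *
  rw [dist_comm u t, dist_comm t s, dist_comm u s]; linarith

lemma wbtw_line {s d : EuclideanSpace ℝ (Fin n)} {a b c : ℝ} (h1 : a ≤ b) (h2 : b ≤ c) :
    Wbtw ℝ (s + a • d) (s + b • d) (s + c • d) := by
  have h := wbtw_smul_vadd_smul_vadd_of_nonneg_of_le (s + a • d) d (sub_nonneg.2 h1)
    (sub_le_sub_right h2 a)
  have e1 : (b - a) • d +ᵥ (s + a • d) = s + b • d := by simp only [vadd_eq_add]; module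
  have e2 : (c - a) • d +ᵥ (s + a • d) = s + c • d := by simp only [vadd_eq_add]; module
  rwa [e1, e2] at h

lemma wbtw_param {x y z : EuclideanSpace ℝ (Fin n)} (h : Wbtw ℝ x y z) :
    ∃ θ : ℝ, 0 ≤ θ ∧ θ ≤ 1 ∧ y = x + θ • (z - x) := by
  rw [← mem_segment_iff_wbtw, segment_eq_image'] at h
  obtain ⟨θ, hθ, hy⟩ := h
  exact ⟨θ, hθ.1, hθ.2, hy.symm⟩

lemma coll_param {s t u : EuclideanSpace ℝ (Fin n)} (hst : s ≠ t) (h : Coll s t u) :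
    ∃ c : ℝ, u = s + c • (t - s) := by
  rcases h with h | h | h
  · obtain ⟨θ, h0, h1, ht'⟩ := wbtw_param ((beta_iff ..).1 h)
    have hθ : θ ≠ 0 := by rintro rfl; simp at ht'; exact hst ht'.symm
    refine ⟨θ⁻¹, ?_⟩
    have e : t - s = θ • (u - s) := by rw [ht']; module
    rw [e, smul_smul, inv_mul_cancel₀ hθ, one_smul]; abel
  · obtain ⟨θ, h0, h1, hu'⟩ := wbtw_param ((beta_iff ..).1 h)
    exact ⟨θ, hu'⟩
  · obtain ⟨θ, h0, h1, hs'⟩ := wbtw_param ((beta_iff ..).1 h)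
    have hθ : θ ≠ 0 := by rintro rfl; simp at hs'; exact hst hs'
    refine ⟨1 - θ⁻¹, ?_⟩
    have e : s - t = θ • (u - t) := by rw [hs']; module
    have e2 : u - t = θ⁻¹ • (s - t) := by rw [e, smul_smul, inv_mul_cancel₀ hθ, one_smul]
    have e3 : u = t + θ⁻¹ • (s - t) := by rw [← e2]; abel
    rw [e3]; module

lemma mem_line_of_param {T L : Set (EuclideanSpace ℝ (Fin n))} (hL : IsLineIn T L)
    {s t : EuclideanSpace ℝ (Fin n)} (hs : s ∈ L) (ht : t ∈ L) (hst : s ≠ t) {c : ℝ}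
    (hu : s + c • (t - s) ∈ T) : s + c • (t - s) ∈ L := by
  obtain ⟨-, -, -, hclose⟩ := hL
  have h0 : s = s + (0 : ℝ) • (t - s) := by module
  have h1 : t = s + (1 : ℝ) • (t - s) := by module
  rcases le_or_gt c 0 with hc | hc
  · refine hclose t ht s hs hst.symm _ hu (Or.inr ?_)
    have hw : Wbtw ℝ (s + c • (t - s)) (s + (0:ℝ) • (t - s)) (s + (1:ℝ) • (t - s)) :=
      wbtw_line hc zero_le_one
    rw [← h0, ← h1] at hw
    exact beta_symm ((beta_iff ..).2 hw)
  rcases le_or_gt c 1 with hc1 | hc1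
  · refine hclose s hs t ht hst _ hu (Or.inl ?_)
    have hw : Wbtw ℝ (s + (0:ℝ) • (t - s)) (s + c • (t - s)) (s + (1:ℝ) • (t - s)) := wbtw_line hc.le hc1
    rw [← h0, ← h1] at hw
    exact (beta_iff ..).2 hw
  · refine hclose s hs t ht hst _ hu (Or.inr ?_)
    have hw : Wbtw ℝ (s + (0:ℝ) • (t - s)) (s + (1:ℝ) • (t - s)) (s + c • (t - s)) := wbtw_line zero_le_one hc1.le
    rw [← h0, ← h1] at hw
    exact (beta_iff ..).2 hw

lemma line_univ_eq {L' : Set (EuclideanSpace ℝ (Fin n))} (hL' : IsLineIn Set.univ L')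
    {s t : EuclideanSpace ℝ (Fin n)} (hs : s ∈ L') (ht : t ∈ L') (hst : s ≠ t) :
    L' = {u | ∃ c : ℝ, u = s + c • (t - s)} := by
  ext u
  simp only [Set.mem_setOf_eq]
  constructor
  · intro hu; exact coll_param hst (hL'.2.2.1 s hs t ht u hu)
  · rintro ⟨c, rfl⟩
    exact mem_line_of_param hL' hs ht hst (Set.mem_univ _)

lemma ratp_combo {s t : EuclideanSpace ℝ (Fin 2)} (hs : s ∈ RationalPlane)
    (ht : t ∈ RationalPlane) (q : ℚ) : s + (q : ℝ) • (t - s) ∈ RationalPlane := by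
  intro i
  obtain ⟨a, ha⟩ := hs i
  obtain ⟨b, hb⟩ := ht i
  refine ⟨a + q * (b - a), ?_⟩
  have e : (s + (q:ℝ) • (t - s)) i = s i + (q:ℝ) * (t i - s i) := by simp
  rw [e, ha, hb]; push_cast; ring

lemma dist_param (s d : EuclideanSpace ℝ (Fin n)) (a b : ℝ) :
    dist (s + a • d) (s + b • d) = |a - b| * ‖d‖ := by
  rw [dist_eq_norm]
  have e : (s + a • d) - (s + b • d) = (a - b) • d := by module
  rw [e, norm_smul, Real.norm_eq_abs]

lemma ratp_zero : (0 : EuclideanSpace ℝ (Fin 2)) ∈ RationalPlane := by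
  intro i; exact ⟨0, by simp⟩

lemma part_flat : ∃ S, IsFlat 2 S ∧ RationalPlane ⊆ S := by
  classical
  refine ⟨{u | ∃ r : Fin 2 → ℝ, u = 0 + ∑ i, r i • EuclideanSpace.single i (1:ℝ)},
    ⟨0, fun i => EuclideanSpace.single i (1:ℝ), ?_, rfl⟩, ?_⟩
  · have h : (fun i => EuclideanSpace.single i (1:ℝ)) =
        ⇑(EuclideanSpace.basisFun (Fin 2) ℝ).toBasis := by
      funext i
      rw [OrthonormalBasis.coe_toBasis, EuclideanSpace.basisFun_apply]
    rw [h]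
    exact Module.Basis.linearIndependent _
  · intro u _
    refine ⟨fun i => u i, ?_⟩
    ext i
    rw [Fin.sum_univ_two]
    fin_cases i <;> simp [EuclideanSpace.single_apply]

lemma part_not1 : ¬ ∃ S, IsFlat (2 - 1) S ∧ RationalPlane ⊆ S := by
  rintro ⟨S, ⟨h, v, -, rfl⟩, hsub⟩
  have hb : EuclideanSpace.single (0 : Fin 2) (1:ℝ) ∈ RationalPlane := by
    intro i; fin_cases i
    · exact ⟨1, by simp⟩
    · exact ⟨0, by simp [EuclideanSpace.single_apply]⟩
  have hcp : EuclideanSpace.single (1 : Fin 2) (1:ℝ) ∈ RationalPlane := by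
    intro i; fin_cases i
    · exact ⟨0, by simp [EuclideanSpace.single_apply]⟩
    · exact ⟨1, by simp⟩
  obtain ⟨ra, hra⟩ := hsub ratp_zero
  obtain ⟨rb, hrb⟩ := hsub hb
  obtain ⟨rc, hrc⟩ := hsub hcp
  rw [Fin.sum_univ_one] at hra hrb hrc
  set x := v 0 with hx
  have keyb : EuclideanSpace.single (0 : Fin 2) (1:ℝ) = (rb 0 - ra 0) • x := by
    have e : EuclideanSpace.single (0 : Fin 2) (1:ℝ) - 0 =
        (h + rb 0 • x) - (h + ra 0 • x) := by rw [← hrb, ← hra]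
    rw [sub_zero] at e; rw [e]; module
  have keyc : EuclideanSpace.single (1 : Fin 2) (1:ℝ) = (rc 0 - ra 0) • x := by
    have e : EuclideanSpace.single (1 : Fin 2) (1:ℝ) - 0 =
        (h + rc 0 • x) - (h + ra 0 • x) := by rw [← hrc, ← hra]
    rw [sub_zero] at e; rw [e]; module
  have h1 : (rb 0 - ra 0) * x 0 = 1 := by
    have := congrArg (fun w : EuclideanSpace ℝ (Fin 2) => w 0) keyb
    simpa [EuclideanSpace.single_apply] using this.symm
  have h2 : (rb 0 - ra 0) * x 1 = 0 := by
    have := congrArg (fun w : EuclideanSpace ℝ (Fin 2) => w 1) keyb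
    simpa [EuclideanSpace.single_apply] using this.symm
  have h3 : (rc 0 - ra 0) * x 0 = 0 := by
    have := congrArg (fun w : EuclideanSpace ℝ (Fin 2) => w 0) keyc
    simpa [EuclideanSpace.single_apply] using this.symm
  have h4 : (rc 0 - ra 0) * x 1 = 1 := by
    have := congrArg (fun w : EuclideanSpace ℝ (Fin 2) => w 1) keyc
    simpa [EuclideanSpace.single_apply] using this.symm
  have : (1 : ℝ) = 0 := by
    calc (1:ℝ) = ((rb 0 - ra 0) * x 0) * ((rc 0 - ra 0) * x 1) := by rw [h1, h4]; ring
      _ = ((rc 0 - ra 0) * x 0) * ((rb 0 - ra 0) * x 1) := by ring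
      _ = 0 := by rw [h3, zero_mul]
  exact one_ne_zero this

lemma part_complete : ∀ L, IsLineIn RationalPlane L → ∀ L', IsLineIn (Set.univ) L' → L ⊆ L' →
    ∀ r ∈ L', ∀ ε > (0 : ℝ), ∃ s ∈ L, dist s r < ε := by
  intro L hL L' hL' hsub r hr ε hε
  obtain ⟨s, hs, t, ht, hst⟩ := hL.2.1
  have hline := line_univ_eq hL' (hsub hs) (hsub ht) hst
  rw [hline] at hr
  obtain ⟨c, rfl⟩ := hr
  have hd : (0:ℝ) < ‖t - s‖ := by
    rw [norm_pos_iff]; exact sub_ne_zero_of_ne hst.symm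
  obtain ⟨q, hq⟩ := exists_rat_near c (div_pos hε hd)
  refine ⟨s + (q : ℝ) • (t - s),
    mem_line_of_param hL hs ht hst (ratp_combo (hL.1 hs) (hL.1 ht) q), ?_⟩
  rw [dist_param, abs_sub_comm]
  calc |c - (q:ℝ)| * ‖t - s‖ < (ε / ‖t - s‖) * ‖t - s‖ :=
        mul_lt_mul_of_pos_right hq hd
    _ = ε := div_mul_cancel₀ ε hd.ne'

lemma eucl_ext2 {x y : EuclideanSpace ℝ (Fin 2)} (h0 : x 0 = y 0) (h1 : x 1 = y 1) :
    x = y := by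
  ext i; fin_cases i <;> assumption

lemma part_closed : ∀ L₁ L₂, IsLineIn RationalPlane L₁ → IsLineIn RationalPlane L₂ →
    (∃ L₁' L₂', IsLineIn (Set.univ) L₁' ∧ IsLineIn (Set.univ) L₂' ∧
        L₁ ⊆ L₁' ∧ L₂ ⊆ L₂' ∧ L₁' ≠ L₂' ∧ (L₁' ∩ L₂').Nonempty) →
    ∃ s ∈ RationalPlane, s ∈ L₁ ∩ L₂ := by
  rintro L₁ L₂ hL₁ hL₂ ⟨L₁', L₂', hL₁', hL₂', h1sub, h2sub, hne, p, hp1, hp2⟩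
  obtain ⟨s₁, hs₁, t₁, ht₁, h12⟩ := hL₁.2.1
  obtain ⟨s₂, hs₂, t₂, ht₂, h34⟩ := hL₂.2.1
  have e1 := line_univ_eq hL₁' (h1sub hs₁) (h1sub ht₁) h12
  have e2 := line_univ_eq hL₂' (h2sub hs₂) (h2sub ht₂) h34
  rw [e1] at hp1; rw [e2] at hp2
  obtain ⟨c, hc⟩ := hp1
  obtain ⟨e, he⟩ := hp2
  have hcoord : ∀ i, s₁ i + c * (t₁ i - s₁ i) = s₂ i + e * (t₂ i - s₂ i) := by
    intro i
    have : (s₁ + c • (t₁ - s₁)) i = (s₂ + e • (t₂ - s₂)) i := by rw [← hc, ← he]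
    simpa using this
  by_cases hD : (t₁ 0 - s₁ 0) * (t₂ 1 - s₂ 1) - (t₁ 1 - s₁ 1) * (t₂ 0 - s₂ 0) = 0
  · -- parallel lines through a common point: L₁' = L₂', contradiction
    exfalso
    have hd2ne : t₂ - s₂ ≠ 0 := sub_ne_zero_of_ne h34.symm
    have hpe : s₂ + e • (t₂ - s₂) = s₁ + c • (t₁ - s₁) := he.symm.trans hc
    obtain ⟨k, hk⟩ : ∃ k : ℝ, t₂ - s₂ = k • (t₁ - s₁) := by
      by_cases h0 : t₁ 0 - s₁ 0 = 0
      · have h1' : t₁ 1 - s₁ 1 ≠ 0 := by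
          intro h1'
          exact sub_ne_zero_of_ne h12.symm
            (eucl_ext2 (by simpa using h0) (by simpa using h1'))
        have hd20 : t₂ 0 - s₂ 0 = 0 := by
          have hz : (t₁ 1 - s₁ 1) * (t₂ 0 - s₂ 0) = 0 := by
            linear_combination (t₂ 1 - s₂ 1) * h0 - hD
          rcases mul_eq_zero.1 hz with h | h
          · exact absurd h h1'
          · exact h
        refine ⟨(t₂ 1 - s₂ 1) / (t₁ 1 - s₁ 1), eucl_ext2 ?_ ?_⟩ <;>
          simp only [PiLp.sub_apply, PiLp.smul_apply, smul_eq_mul]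
        · rw [h0, mul_zero, hd20]
        · exact (div_mul_cancel₀ _ h1').symm
      · refine ⟨(t₂ 0 - s₂ 0) / (t₁ 0 - s₁ 0), eucl_ext2 ?_ ?_⟩ <;>
          simp only [PiLp.sub_apply, PiLp.smul_apply, smul_eq_mul]
        · exact (div_mul_cancel₀ _ h0).symm
        · rw [div_mul_eq_mul_div, eq_div_iff h0]
          linear_combination hD
    have hk0 : k ≠ 0 := by
      intro h
      exact hd2ne (by rw [hk, h, zero_smul])
    apply hne
    rw [e1, e2]
    have key : ∀ c' : ℝ, s₂ + ((c' - c) / k + e) • (t₂ - s₂) = s₁ + c' • (t₁ - s₁) := by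
      intro c'
      have h5 : (c' - c) / k * k = c' - c := div_mul_cancel₀ _ hk0
      calc s₂ + ((c' - c) / k + e) • (t₂ - s₂)
          = (s₂ + e • (t₂ - s₂)) + ((c' - c) / k * k) • (t₁ - s₁) := by rw [hk]; module
        _ = (s₁ + c • (t₁ - s₁)) + (c' - c) • (t₁ - s₁) := by rw [h5, hpe]
        _ = s₁ + c' • (t₁ - s₁) := by module
    ext u
    simp only [Set.mem_setOf_eq]
    constructor
    · rintro ⟨c', rfl⟩
      exact ⟨(c' - c) / k + e, (key c').symm⟩
    · rintro ⟨e', rfl⟩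
      refine ⟨(e' - e) * k + c, ?_⟩
      have h6 : ((e' - e) * k + c - c) / k + e = e' := by field_simp; ring
      rw [← key ((e' - e) * k + c), h6]
  · -- genuinely intersecting lines: solve for the intersection, it is rational
    obtain ⟨a0, ha0⟩ := hL₁.1 hs₁ 0
    obtain ⟨a1, ha1⟩ := hL₁.1 hs₁ 1
    obtain ⟨b0, hb0⟩ := hL₁.1 ht₁ 0
    obtain ⟨b1, hb1⟩ := hL₁.1 ht₁ 1
    obtain ⟨a0', ha0'⟩ := hL₂.1 hs₂ 0
    obtain ⟨a1', ha1'⟩ := hL₂.1 hs₂ 1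
    obtain ⟨b0', hb0'⟩ := hL₂.1 ht₂ 0
    obtain ⟨b1', hb1'⟩ := hL₂.1 ht₂ 1
    have E0 := hcoord 0
    have E1 := hcoord 1
    have hDcast : (((b0 - a0) * (b1' - a1') - (b1 - a1) * (b0' - a0') : ℚ) : ℝ) =
        (t₁ 0 - s₁ 0) * (t₂ 1 - s₂ 1) - (t₁ 1 - s₁ 1) * (t₂ 0 - s₂ 0) := by
      rw [ha0, ha1, hb0, hb1, ha0', ha1', hb0', hb1']
      push_cast; ring
    obtain ⟨qc, hqc⟩ : ∃ q : ℚ, (q : ℝ) = c := by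
      have hcD : c * ((t₁ 0 - s₁ 0) * (t₂ 1 - s₂ 1) - (t₁ 1 - s₁ 1) * (t₂ 0 - s₂ 0)) =
          (s₂ 0 - s₁ 0) * (t₂ 1 - s₂ 1) - (s₂ 1 - s₁ 1) * (t₂ 0 - s₂ 0) := by
        linear_combination (t₂ 1 - s₂ 1) * E0 - (t₂ 0 - s₂ 0) * E1
      refine ⟨((a0' - a0) * (b1' - a1') - (a1' - a1) * (b0' - a0')) /
        ((b0 - a0) * (b1' - a1') - (b1 - a1) * (b0' - a0')), ?_⟩
      have hNcast : (((a0' - a0) * (b1' - a1') - (a1' - a1) * (b0' - a0') : ℚ) : ℝ) =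
          (s₂ 0 - s₁ 0) * (t₂ 1 - s₂ 1) - (s₂ 1 - s₁ 1) * (t₂ 0 - s₂ 0) := by
        rw [ha0, ha1, ha0', ha1', hb0', hb1']
        push_cast; ring
      rw [Rat.cast_div, hNcast, hDcast, eq_comm, eq_div_iff hD]
      exact hcD
    obtain ⟨qe, hqe⟩ : ∃ q : ℚ, (q : ℝ) = e := by
      have heD : e * ((t₁ 0 - s₁ 0) * (t₂ 1 - s₂ 1) - (t₁ 1 - s₁ 1) * (t₂ 0 - s₂ 0)) =
          (s₂ 0 - s₁ 0) * (t₁ 1 - s₁ 1) - (s₂ 1 - s₁ 1) * (t₁ 0 - s₁ 0) := by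
        linear_combination (t₁ 1 - s₁ 1) * E0 - (t₁ 0 - s₁ 0) * E1
      refine ⟨((a0' - a0) * (b1 - a1) - (a1' - a1) * (b0 - a0)) /
        ((b0 - a0) * (b1' - a1') - (b1 - a1) * (b0' - a0')), ?_⟩
      have hNcast : (((a0' - a0) * (b1 - a1) - (a1' - a1) * (b0 - a0) : ℚ) : ℝ) =
          (s₂ 0 - s₁ 0) * (t₁ 1 - s₁ 1) - (s₂ 1 - s₁ 1) * (t₁ 0 - s₁ 0) := by
        rw [ha0, ha1, hb0, hb1, ha0', ha1']
        push_cast; ring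
      rw [Rat.cast_div, hNcast, hDcast, eq_comm, eq_div_iff hD]
      exact heD
    refine ⟨p, ?_, ?_, ?_⟩
    · rw [hc, ← hqc]
      exact ratp_combo (hL₁.1 hs₁) (hL₁.1 ht₁) qc
    · rw [hc, ← hqc]
      exact mem_line_of_param hL₁ hs₁ ht₁ h12
        (ratp_combo (hL₁.1 hs₁) (hL₁.1 ht₁) qc)
    · rw [he, ← hqe]
      exact mem_line_of_param hL₂ hs₂ ht₂ h34
        (ratp_combo (hL₂.1 hs₂) (hL₂.1 ht₂) qe)

theorem stmt_8 : ExtendsLinearlyIn 2 RationalPlane := by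
  exact ⟨RationalPlane, ⟨part_flat, part_not1, part_complete, part_closed⟩, 1, one_pos,
    0, ⟨ratp_zero, ratp_zero⟩, fun u hu _ => hu⟩
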